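/- In the five-state symmetric protocol of Algorithm 3, if a reachable configuration C (from the all-r^ω₀ configuration on n agents) satisfies #token = 0 with n even, then #red = #blue = n/2; if it satisfies #token = 1 with n odd, then #red − #blue = 1. -/
import Mathlib


/-- States of the five-state symmetric protocol: r^ω₀, r^ω₁, b^ω, r, b. -/
inductive St : Type
  | rw0 | rw1 | bw | r | b
deriving DecidableEq

/-- Deterministic transition function of Algorithm 3 (with symmetric variants). -/
def delta : St → St → St × St
  | .rw0, .rw0 => (.rw1, .rw1)
  | .rw1, .rw1 => (.rw0, .rw0)
  | .rw0, .rw1 => (.r, .b)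
  | .rw1, .rw0 => (.b, .r)
  | .rw0, .r   => (.r, .rw0)
  | .r,  .rw0  => (.rw0, .r)
  | .rw1, .r   => (.r, .rw0)
  | .r,  .rw1  => (.rw0, .r)
  | .bw, .b    => (.b, .bw)
  | .b,  .bw   => (.bw, .b)
  | .rw0, .b   => (.r, .bw)
  | .b,  .rw0  => (.bw, .r)
  | .rw1, .b   => (.r, .bw)
  | .b,  .rw1  => (.bw, .r)
  | .bw, .r    => (.b, .rw0)
  | .r,  .bw   => (.rw0, .b)
  | .rw0, .bw  => (.b, .b)
  | .bw, .rw0  => (.b, .b)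
  | .rw1, .bw  => (.b, .b)
  | .bw, .rw1  => (.b, .b)
  | p, q       => (p, q)

/-- One step: apply the rule to an ordered pair of distinct agents. -/
def Step {n : ℕ} (C C' : Fin n → St) : Prop :=
  ∃ i j : Fin n, i ≠ j ∧
    C' = Function.update (Function.update C i (delta (C i) (C j)).1) j
          (delta (C i) (C j)).2

/-- Number of agents in state `s`. -/
def cnt {n : ℕ} (C : Fin n → St) (s : St) : ℕ :=
  (Finset.univ.filter fun a => C a = s).card

/-- Number of token-holding agents (state r^ω₀, r^ω₁ or b^ω). -/
def tokens {n : ℕ} (C : Fin n → St) : ℕ := cnt C .rw0 + cnt C .rw1 + cnt C .bw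

/-- Number of red agents (state r^ω₀, r^ω₁ or r). -/
def reds {n : ℕ} (C : Fin n → St) : ℕ := cnt C .rw0 + cnt C .rw1 + cnt C .r

/-- Number of blue agents (state b^ω or b). -/
def blues {n : ℕ} (C : Fin n → St) : ℕ := cnt C .bw + cnt C .b

/-- Integer weight: r ↦ 1, b ↦ -1, bw ↦ -2, tokens rw0/rw1 ↦ 0. -/
def w : St → ℤ
  | .r => 1
  | .b => -1
  | .bw => -2
  | _ => 0

def W {n : ℕ} (C : Fin n → St) : ℤ := ∑ a, w (C a)

lemma delta_w (p q : St) : w (delta p q).1 + w (delta p q).2 = w p + w q := by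
  cases p <;> cases q <;> rfl

lemma sum_update {n : ℕ} (f : Fin n → ℤ) (i : Fin n) (b : ℤ) :
    ∑ a, Function.update f i b a = ∑ a, f a - f i + b := by
  rw [Finset.sum_update_of_mem (Finset.mem_univ i),
    Finset.sum_eq_sum_sdiff_singleton_add (Finset.mem_univ i) f]
  ring

lemma W_step {n : ℕ} {C C' : Fin n → St} (h : Step C C') : W C' = W C := by
  obtain ⟨i, j, hij, rfl⟩ := h
  unfold W
  have h1 : ∀ a, w (Function.update (Function.update C i (delta (C i) (C j)).1) j
      (delta (C i) (C j)).2 a) =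
      Function.update (Function.update (fun a => w (C a)) i (w (delta (C i) (C j)).1)) j
      (w (delta (C i) (C j)).2) a := by
    intro a
    by_cases haj : a = j
    · subst haj; simp
    · by_cases hai : a = i
      · subst hai
        simp [Function.update_of_ne haj, Function.update_of_ne hij]
      · simp [Function.update_of_ne haj, Function.update_of_ne hai]
  simp only [h1]
  rw [sum_update, sum_update]
  have := delta_w (C i) (C j)
  have hji : Function.update (fun a => w (C a)) i (w (delta (C i) (C j)).1) j = w (C j) :=
    Function.update_of_ne (Ne.symm hij) _ _
  rw [hji]
  omega

lemma cnt_sum {n : ℕ} (C : Fin n → St) (s : St) :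
    (cnt C s : ℤ) = ∑ a, (if C a = s then (1 : ℤ) else 0) := by
  unfold cnt
  rw [Finset.sum_boole]

lemma W_eq {n : ℕ} (C : Fin n → St) :
    W C = (cnt C .r : ℤ) - cnt C .b - 2 * cnt C .bw := by
  unfold W
  rw [cnt_sum, cnt_sum, cnt_sum, ← Finset.sum_sub_distrib, Finset.mul_sum,
    ← Finset.sum_sub_distrib]
  apply Finset.sum_congr rfl
  intro a _
  cases h : C a <;> simp [w]

lemma total_eq {n : ℕ} (C : Fin n → St) :
    cnt C .rw0 + cnt C .rw1 + cnt C .bw + cnt C .r + cnt C .b = n := by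
  have : ((cnt C .rw0 : ℤ) + cnt C .rw1 + cnt C .bw + cnt C .r + cnt C .b) = n := by
    rw [cnt_sum, cnt_sum, cnt_sum, cnt_sum, cnt_sum, ← Finset.sum_add_distrib,
      ← Finset.sum_add_distrib, ← Finset.sum_add_distrib, ← Finset.sum_add_distrib]
    rw [show (n : ℤ) = ∑ _a : Fin n, (1 : ℤ) by simp]
    apply Finset.sum_congr rfl
    intro a _
    cases h : C a <;> simp
  omega

theorem stmt8 (n : ℕ) (C : Fin n → St)
    (hreach : Relation.ReflTransGen Step (fun _ => St.rw0) C) :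
    (Even n → tokens C = 0 → reds C = n / 2 ∧ blues C = n / 2) ∧
    (Odd n → tokens C = 1 → reds C = blues C + 1) := by
  have hW : W C = 0 := by
    induction hreach with
    | refl => simp [W, w]
    | tail _ hstep ih => rw [W_step hstep, ih]
  rw [W_eq] at hW
  have htot := total_eq C
  constructor
  · intro _ htok
    unfold tokens at htok
    unfold reds blues
    omega
  · intro _ htok
    unfold tokens at htok
    unfold reds blues
    omega
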